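/- For integers m1, m2, n1, n2 ≥ 0, the set S of triples (a,b,c) of non-negative integers satisfying a ≤ min(m1,n1), c ≤ min(m2,n2), a+b+c ≤ min(m1+m2, n1+n2), 2a+b ≤ m1+n1, and 2c+b ≤ m2+n2 has the same cardinality as the set T of triples (a,b,c) of non-negative integers satisfying b ≤ min(m2,n1), a+b−c ≤ n1, b+c−a ≤ m2, c ≤ n2, a ≤ m1, 2a+b−c ≤ m1+n1, and 2c+b−a ≤ m2+n2. -/
import Mathlib

set_option maxHeartbeats 2000000

/-- Type A2: the fusion polytope lattice set S has the same cardinality as the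
Pak–Vallejo set T. -/
theorem stmt_0 (m1 m2 n1 n2 : ℤ) (hm1 : 0 ≤ m1) (hm2 : 0 ≤ m2)
    (hn1 : 0 ≤ n1) (hn2 : 0 ≤ n2) :
    Set.ncard {p : ℤ × ℤ × ℤ | 0 ≤ p.1 ∧ 0 ≤ p.2.1 ∧ 0 ≤ p.2.2 ∧
        p.1 ≤ min m1 n1 ∧ p.2.2 ≤ min m2 n2 ∧
        p.1 + p.2.1 + p.2.2 ≤ min (m1 + m2) (n1 + n2) ∧
        2 * p.1 + p.2.1 ≤ m1 + n1 ∧ 2 * p.2.2 + p.2.1 ≤ m2 + n2} =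
    Set.ncard {p : ℤ × ℤ × ℤ | 0 ≤ p.1 ∧ 0 ≤ p.2.1 ∧ 0 ≤ p.2.2 ∧
        p.2.1 ≤ min m2 n1 ∧ p.1 + p.2.1 - p.2.2 ≤ n1 ∧ p.2.1 + p.2.2 - p.1 ≤ m2 ∧
        p.2.2 ≤ n2 ∧ p.1 ≤ m1 ∧
        2 * p.1 + p.2.1 - p.2.2 ≤ m1 + n1 ∧ 2 * p.2.2 + p.2.1 - p.1 ≤ m2 + n2} := by
  -- shift amount along direction (1,-1,1); preserves u = a+b and v = b+c
  set sh : ℤ × ℤ × ℤ → ℤ := fun p =>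
    min (p.1 + p.2.1) (p.2.1 + p.2.2) -
    min (min (p.1 + p.2.1) (p.2.1 + p.2.2))
      (min m2 (min n1 (min (n1 + (p.2.1 + p.2.2) - (p.1 + p.2.1))
        (m2 + (p.1 + p.2.1) - (p.2.1 + p.2.2))))) with hsh
  set φ : ℤ × ℤ × ℤ → ℤ × ℤ × ℤ := fun p => (p.1 + sh p, p.2.1 - sh p, p.2.2 + sh p)
    with hφ
  have hbij : Set.BijOn φ
      {p : ℤ × ℤ × ℤ | 0 ≤ p.1 ∧ 0 ≤ p.2.1 ∧ 0 ≤ p.2.2 ∧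
        p.1 ≤ min m1 n1 ∧ p.2.2 ≤ min m2 n2 ∧
        p.1 + p.2.1 + p.2.2 ≤ min (m1 + m2) (n1 + n2) ∧
        2 * p.1 + p.2.1 ≤ m1 + n1 ∧ 2 * p.2.2 + p.2.1 ≤ m2 + n2}
      {p : ℤ × ℤ × ℤ | 0 ≤ p.1 ∧ 0 ≤ p.2.1 ∧ 0 ≤ p.2.2 ∧
        p.2.1 ≤ min m2 n1 ∧ p.1 + p.2.1 - p.2.2 ≤ n1 ∧ p.2.1 + p.2.2 - p.1 ≤ m2 ∧
        p.2.2 ≤ n2 ∧ p.1 ≤ m1 ∧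
        2 * p.1 + p.2.1 - p.2.2 ≤ m1 + n1 ∧ 2 * p.2.2 + p.2.1 - p.1 ≤ m2 + n2} := by
    refine ⟨?_, ?_, ?_⟩
    · rintro ⟨a, b, c⟩ hp
      simp only [Set.mem_setOf_eq, hφ, hsh] at hp ⊢
      omega
    · rintro ⟨a, b, c⟩ hp ⟨a', b', c'⟩ hq heq
      simp only [hφ, Prod.mk.injEq] at heq
      obtain ⟨h1, h2, h3⟩ := heq
      have hu : a + b = a' + b' := by linarith
      have hv : b + c = b' + c' := by linarith
      have hs : sh (a, b, c) = sh (a', b', c') := by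
        simp only [hsh]
        rw [hu, hv]
      simp only [Prod.mk.injEq]
      refine ⟨by linarith, by linarith, by linarith⟩
    · rintro ⟨a, b, c⟩ hq
      refine ⟨(a - sh (a, b, c), b + sh (a, b, c), c - sh (a, b, c)), ?_, ?_⟩
      · simp only [Set.mem_setOf_eq, hsh] at hq ⊢
        omega
      · simp only [Set.mem_setOf_eq, hφ, hsh, Prod.mk.injEq] at hq ⊢
        omega
  rw [← hbij.image_eq]
  exact (Set.ncard_image_of_injOn hbij.injOn).symm
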